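/- The expected-end generating function E satisfies, in ℝ[[v]]: αβ·(1−v)³·(1+v+v²)·(E∘Z) = v·(vα+β)·(3v²β + 3α + 3vβ + vα + αv² + αv³). -/

import Mathlib

open PowerSeries Filter

noncomputable section

/-- Composition `h ∘ Z` of formal power series; this is the usual composition whenever
`Z` has zero constant term (then for each `n` only finitely many terms contribute). -/
def psComp (h Z : PowerSeries ℝ) : PowerSeries ℝ :=
  PowerSeries.mk fun n => ∑' k : ℕ, (PowerSeries.coeff k h) * (PowerSeries.coeff n (Z ^ k))

/-- The substitution series `Z = v · ((α+βv)(β+αv))⁻¹ ∈ ℝ[[v]]`; the inverse exists since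
the constant term `αβ` is nonzero, and `Z` has zero constant term. -/
def Zsub (α β : ℝ) : PowerSeries ℝ :=
  PowerSeries.X * (((PowerSeries.C α) + (PowerSeries.C β) * PowerSeries.X) *
    ((PowerSeries.C β) + (PowerSeries.C α) * PowerSeries.X))⁻¹

/-- The expected-end generating function `E = Σ_k 2k·f_k + Σ_k (2k+1)·g_k`; for each `n`
the support condition makes the series of `n`-th coefficients a finite sum. -/
def expectedEnd (f g : ℕ → PowerSeries ℝ) : PowerSeries ℝ :=
  PowerSeries.mk fun n =>
    ∑' k : ℕ, ((2 * k : ℝ) * PowerSeries.coeff n (f k)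
      + (2 * (k : ℝ) + 1) * PowerSeries.coeff n (g k))

open Finset
variable {Z : PowerSeries ℝ}

lemma coeff_pow_zero_of_lt (hZ0 : constantCoeff Z = 0) {n k : ℕ} (h : n < k) :
    coeff n (Z ^ k) = 0 := by
  obtain ⟨w, hw⟩ : (X : PowerSeries ℝ) ^ k ∣ Z ^ k :=
    pow_dvd_pow_of_dvd ((PowerSeries.X_dvd_iff).2 hZ0) k
  rw [hw, mul_comm, PowerSeries.coeff_mul_X_pow', if_neg (by omega)]

lemma psComp_coeff (hZ0 : constantCoeff Z = 0) (h : PowerSeries ℝ) (n : ℕ) :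
    coeff n (psComp h Z) =
      ∑ k ∈ Finset.range (n+1), coeff k h * coeff n (Z ^ k) := by
  rw [psComp, coeff_mk]
  exact tsum_eq_sum (fun k hk => by
    rw [coeff_pow_zero_of_lt hZ0 (by simpa using hk), mul_zero])


lemma psComp_add (hZ0 : constantCoeff Z = 0) (h₁ h₂ : PowerSeries ℝ) :
    psComp (h₁ + h₂) Z = psComp h₁ Z + psComp h₂ Z := by
  ext n
  rw [map_add, psComp_coeff hZ0, psComp_coeff hZ0, psComp_coeff hZ0, ← Finset.sum_add_distrib]
  exact Finset.sum_congr rfl fun k _ => by rw [map_add, add_mul]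

lemma psComp_C_mul (hZ0 : constantCoeff Z = 0) (c : ℝ) (h : PowerSeries ℝ) :
    psComp (C c * h) Z = C c * psComp h Z := by
  ext n
  rw [psComp_coeff hZ0, PowerSeries.coeff_C_mul, psComp_coeff hZ0, Finset.mul_sum]
  exact Finset.sum_congr rfl fun k _ => by rw [PowerSeries.coeff_C_mul, mul_assoc]

lemma psComp_one (hZ0 : constantCoeff Z = 0) : psComp 1 Z = 1 := by
  ext n
  rw [psComp_coeff hZ0]
  rw [Finset.sum_eq_single 0]
  · simp
  · intro k hk hk0
    rw [PowerSeries.coeff_one, if_neg hk0, zero_mul]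
  · intro h; simp at h

lemma psComp_X_mul (hZ0 : constantCoeff Z = 0) (h : PowerSeries ℝ) :
    psComp (X * h) Z = Z * psComp h Z := by
  ext n
  calc coeff n (psComp (X * h) Z)
      = ∑ k ∈ Finset.range (n+1), coeff k (X * h) * coeff n (Z ^ k) :=
        psComp_coeff hZ0 _ n
    _ = ∑ k ∈ Finset.range (n+1), coeff k h * coeff n (Z ^ (k+1)) := by
        rw [Finset.sum_range_succ' _ n, Finset.sum_range_succ]
        simp [PowerSeries.coeff_succ_X_mul,
          coeff_pow_zero_of_lt hZ0 (Nat.lt_succ_self n)]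
    _ = ∑ k ∈ Finset.range (n+1), coeff k h *
          ∑ p ∈ HasAntidiagonal.antidiagonal n, coeff p.1 Z * coeff p.2 (Z ^ k) := by
        refine Finset.sum_congr rfl fun k _ => ?_
        rw [pow_succ', PowerSeries.coeff_mul]
    _ = ∑ p ∈ HasAntidiagonal.antidiagonal n, coeff p.1 Z *
          ∑ k ∈ Finset.range (n+1), coeff k h * coeff p.2 (Z ^ k) := by
        simp only [Finset.mul_sum]
        rw [Finset.sum_comm]
        exact Finset.sum_congr rfl fun p _ => Finset.sum_congr rfl fun k _ => by ring
    _ = ∑ p ∈ HasAntidiagonal.antidiagonal n, coeff p.1 Z * coeff p.2 (psComp h Z) := by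
        refine Finset.sum_congr rfl fun p hp => ?_
        rw [Finset.HasAntidiagonal.mem_antidiagonal] at hp
        rw [psComp_coeff hZ0]
        congr 1
        refine (Finset.sum_subset (Finset.range_subset_range.2 (by omega)) ?_).symm
        intro k hk hk2
        simp only [Finset.mem_range] at hk hk2
        rw [coeff_pow_zero_of_lt hZ0 (by omega), mul_zero]
    _ = coeff n (Z * psComp h Z) := (PowerSeries.coeff_mul _ _ _).symm

lemma psComp_CXmul (hZ0 : constantCoeff Z = 0) (c : ℝ) (h : PowerSeries ℝ) :
    psComp (C c * X * h) Z = C c * Z * psComp h Z := by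
  rw [mul_assoc, psComp_C_mul hZ0, psComp_X_mul hZ0, mul_assoc]

lemma psComp_ord (hZ0 : constantCoeff Z = 0) {h : PowerSeries ℝ} {N : ℕ}
    (hh : ∀ m, m < N → coeff m h = 0) {n : ℕ} (hn : n < N) :
    coeff n (psComp h Z) = 0 := by
  rw [psComp_coeff hZ0]
  refine Finset.sum_eq_zero fun k hk => ?_
  rw [hh k (by simp at hk; omega), zero_mul]

lemma expectedEnd_coeff (f g : ℕ → PowerSeries ℝ)
    (hsupp : ∀ m N : ℕ, m < N → coeff m (f N) = 0 ∧ coeff m (g N) = 0) (n : ℕ) :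
    coeff n (expectedEnd f g) =
      ∑ k ∈ Finset.range (n+1),
        ((2 * k : ℝ) * coeff n (f k) + (2 * (k : ℝ) + 1) * coeff n (g k)) := by
  rw [expectedEnd, coeff_mk]
  refine tsum_eq_sum fun k hk => ?_
  have hnk : n < k := by simpa using hk
  rw [(hsupp n k hnk).1, (hsupp n k hnk).2, mul_zero, mul_zero, add_zero]

lemma psComp_expectedEnd (hZ0 : constantCoeff Z = 0) (f g : ℕ → PowerSeries ℝ)
    (hsupp : ∀ m N : ℕ, m < N → coeff m (f N) = 0 ∧ coeff m (g N) = 0) :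
    psComp (expectedEnd f g) Z =
      expectedEnd (fun k => psComp (f k) Z) (fun k => psComp (g k) Z) := by
  ext n
  have hFs : ∀ N m : ℕ, m < N → coeff m (psComp (f N) Z) = 0 ∧
      coeff m (psComp (g N) Z) = 0 := fun N m hm =>
    ⟨psComp_ord hZ0 (fun m' hm' => (hsupp m' N hm').1) hm,
     psComp_ord hZ0 (fun m' hm' => (hsupp m' N hm').2) hm⟩
  rw [expectedEnd_coeff _ _ (fun m N h => hFs N m h) n]
  rw [psComp_coeff hZ0]
  calc ∑ k ∈ Finset.range (n+1), coeff k (expectedEnd f g) * coeff n (Z ^ k)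
      = ∑ k ∈ Finset.range (n+1), (∑ j ∈ Finset.range (n+1),
          ((2 * j : ℝ) * coeff k (f j) + (2 * (j : ℝ) + 1) * coeff k (g j)))
            * coeff n (Z ^ k) := by
        refine Finset.sum_congr rfl fun k hk => ?_
        rw [expectedEnd_coeff f g hsupp k]
        congr 1
        refine Finset.sum_subset (Finset.range_subset_range.2 (by simp at hk; omega)) ?_
        intro j hj hj2
        simp only [Finset.mem_range] at hj hj2
        rw [(hsupp k j (by omega)).1, (hsupp k j (by omega)).2]
        ring
    _ = ∑ j ∈ Finset.range (n+1), ∑ k ∈ Finset.range (n+1),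
          ((2 * j : ℝ) * (coeff k (f j) * coeff n (Z ^ k))
            + (2 * (j : ℝ) + 1) * (coeff k (g j) * coeff n (Z ^ k))) := by
        simp only [Finset.sum_mul]
        rw [Finset.sum_comm]
        exact Finset.sum_congr rfl fun j _ => Finset.sum_congr rfl fun k _ => by ring
    _ = ∑ j ∈ Finset.range (n+1),
          ((2 * j : ℝ) * coeff n (psComp (f j) Z)
            + (2 * (j : ℝ) + 1) * coeff n (psComp (g j) Z)) := by
        refine Finset.sum_congr rfl fun j _ => ?_
        rw [psComp_coeff hZ0, psComp_coeff hZ0, Finset.sum_add_distrib,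
          Finset.mul_sum, Finset.mul_sum]

lemma sumA (M : PowerSeries ℝ) (F : ℕ → PowerSeries ℝ)
    (hF : ∀ j, F (j+1) = X ^ j * M) (hM0 : coeff 0 M = 0) (n : ℕ) :
    ∑ j ∈ Finset.range (n+1), (2 * (j:ℝ)) * coeff n (F j)
      = ∑ i ∈ Finset.range (n+1), 2 * ((n:ℝ) + 1 - i) * coeff i M := by
  have hext : ∑ j ∈ Finset.range (n+1), (2 * (j:ℝ)) * coeff n (F j)
      = ∑ j ∈ Finset.range (n+2), (2 * (j:ℝ)) * coeff n (F j) := by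
    rw [Finset.sum_range_succ (fun j => (2 * (j:ℝ)) * coeff n (F j)) (n+1)]
    rw [hF n, PowerSeries.coeff_X_pow_mul', if_pos (le_refl n), Nat.sub_self, hM0,
      mul_zero, add_zero]
  rw [hext, ← Finset.sum_range_reflect, Finset.sum_range_succ]
  have h2 : n + 2 - 1 - (n+1) = 0 := by omega
  rw [h2]
  simp only [Nat.cast_zero, mul_zero, zero_mul, add_zero]
  refine Finset.sum_congr rfl fun i hi => ?_
  have hin : i ≤ n := by simpa [Nat.lt_succ_iff] using hi
  have h3 : n + 2 - 1 - i = (n - i) + 1 := by omega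
  rw [h3, hF (n - i), PowerSeries.coeff_X_pow_mul', if_pos (by omega : n - i ≤ n)]
  have h4 : n - (n - i) = i := by omega
  rw [h4]
  congr 1
  push_cast [h3]
  have : ((n - i : ℕ) : ℝ) = (n:ℝ) - i := by
    push_cast [Nat.cast_sub hin]; ring
  rw [this]; ring

lemma sumB (N : PowerSeries ℝ) (G : ℕ → PowerSeries ℝ)
    (hG : ∀ j, G j = X ^ j * N) (n : ℕ) :
    ∑ j ∈ Finset.range (n+1), (2 * (j:ℝ) + 1) * coeff n (G j)
      = ∑ i ∈ Finset.range (n+1), (2 * ((n:ℝ) - i) + 1) * coeff i N := by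
  rw [← Finset.sum_range_reflect]
  refine Finset.sum_congr rfl fun i hi => ?_
  have hin : i ≤ n := by simpa [Nat.lt_succ_iff] using hi
  have h3 : n + 1 - 1 - i = n - i := by omega
  rw [h3, hG (n - i), PowerSeries.coeff_X_pow_mul', if_pos (by omega : n - i ≤ n)]
  have h4 : n - (n - i) = i := by omega
  rw [h4]
  congr 1
  have : ((n - i : ℕ) : ℝ) = (n:ℝ) - i := by
    push_cast [Nat.cast_sub hin]; ring
  rw [this]

lemma closed_form (M N : PowerSeries ℝ) (F G : ℕ → PowerSeries ℝ)
    (hF : ∀ j, F (j+1) = X ^ j * M) (hG : ∀ j, G j = X ^ j * N)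
    (hM0 : coeff 0 M = 0) :
    ((1 : PowerSeries ℝ) - X) ^ 2 * expectedEnd F G = 2 * M + (1 + X) * N := by
  have hsupp : ∀ m j : ℕ, m < j → coeff m (F j) = 0 ∧ coeff m (G j) = 0 := by
    intro m j hmj
    constructor
    · match j, hmj with
      | j+1, hmj =>
        rw [hF j, PowerSeries.coeff_X_pow_mul']
        rcases Nat.lt_or_ge m j with h | h
        · rw [if_neg (by omega)]
        · have : j = m := by omega
          subst this
          rw [if_pos le_rfl, Nat.sub_self, hM0]
    · rw [hG j, PowerSeries.coeff_X_pow_mul', if_neg (by omega)]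
  set E := expectedEnd F G with hE
  set s : ℕ → ℝ := fun n => coeff n E with hsdef
  have hs : ∀ n, s n = ∑ i ∈ Finset.range (n+1),
      (2 * ((n:ℝ) + 1 - i) * coeff i M + (2 * ((n:ℝ) - i) + 1) * coeff i N) := by
    intro n
    have := expectedEnd_coeff F G hsupp n
    rw [hsdef]
    simp only [hE, this, Finset.sum_add_distrib]
    rw [sumA M F hF hM0 n, sumB N G hG n]
  -- key telescoping identity
  have key : ∀ n : ℕ, s (n+2) - 2 * s (n+1) + s n
      = 2 * coeff (n+2) M + coeff (n+2) N + coeff (n+1) N := by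
    intro n
    rw [hs (n+2), hs (n+1), hs n]
    rw [show n+2+1 = (n+1)+1+1 from rfl, Finset.sum_range_succ, Finset.sum_range_succ,
      Finset.sum_range_succ (n := (n+1))]
    have hcomb : (∑ i ∈ Finset.range (n+1),
        (2 * (((n:ℝ)+2) + 1 - i) * coeff i M + (2 * (((n:ℝ)+2) - i) + 1) * coeff i N))
      + (∑ i ∈ Finset.range (n+1),
        (2 * ((n:ℝ) + 1 - i) * coeff i M + (2 * ((n:ℝ) - i) + 1) * coeff i N))
      - 2 * (∑ i ∈ Finset.range (n+1),
        (2 * (((n:ℝ)+1) + 1 - i) * coeff i M + (2 * (((n:ℝ)+1) - i) + 1) * coeff i N))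
      = 0 := by
      rw [← Finset.sum_add_distrib, Finset.mul_sum, ← Finset.sum_sub_distrib]
      exact Finset.sum_eq_zero fun i _ => by ring
    push_cast at hcomb ⊢
    linear_combination hcomb
  -- now the coefficientwise finale
  ext n
  have hlhs : ((1 : PowerSeries ℝ) - X) ^ 2 * E = E - X^1 * E - (X^1 * E - X^2 * E) := by
    ring
  have hrhs : (2 : PowerSeries ℝ) * M + (1 + X) * N = M + M + (N + X^1 * N) := by
    ring
  rw [hlhs, hrhs]
  simp only [map_sub, map_add, PowerSeries.coeff_X_pow_mul']
  match n with
  | 0 =>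
    simp only [if_neg (by omega : ¬ 1 ≤ 0), if_neg (by omega : ¬ 2 ≤ 0)]
    rw [show (coeff 0) E = s 0 from rfl, hs 0]
    simp
    ring
  | 1 =>
    simp only [if_pos (le_refl 1), if_neg (by omega : ¬ 2 ≤ 1)]
    rw [show (coeff 1) E = s 1 from rfl, show (coeff (1-1)) E = s 0 from rfl, hs 1, hs 0]
    simp [Finset.sum_range_succ]
    ring
  | (n+2) =>
    simp only [if_pos (by omega : 1 ≤ n+2), if_pos (by omega : 2 ≤ n+2)]
    rw [show n+2-1 = n+1 from rfl, show n+2-2 = n from rfl]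
    have := key n
    rw [show (coeff (n+2)) E = s (n+2) from rfl, show (coeff (n+1)) E = s (n+1) from rfl,
      show (coeff n) E = s n from rfl]
    linarith [key n]

lemma hCne (c : ℝ) (hc : c ≠ 0) : (C c : PowerSeries ℝ) ≠ 0 := fun h =>
  hc (by simpa using congrArg (constantCoeff) h)


/-- The expected-end generating function becomes rational after the substitution:
`αβ(1-v)³(1+v+v²)·(E∘Z) = v(vα+β)(3v²β+3α+3vβ+vα+αv²+αv³)`. -/
theorem expectedEnd_substituted
    (α β : ℝ) (hα0 : 0 < α) (hα1 : α < 1) (hβ : β = 1 - α)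
    (f g : ℕ → PowerSeries ℝ) (fQ : PowerSeries ℝ)
    (hf : ∀ N : ℕ, f (N + 2) =
      C (α * β) * X * f (N + 1) + C (α * β) * X * f (N + 3)
        + C (α ^ 2 + β ^ 2) * X * f (N + 2))
    (hf1 : f 1 = C (α * β) * X * f 0 + C (α * β) * X * f 2
        + C (α ^ 2 + β ^ 2) * X * f 1 + C (β ^ 2) * X * fQ)
    (hf0 : f 0 = 1 + C (α * β) * X * f 1 + C (α ^ 2 + β ^ 2) * X * f 0
        + C (α * β) * X * fQ)
    (hfQ : fQ = C (α * β) * X * g 0 + C (α ^ 2) * X * fQ)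
    (hg : ∀ N : ℕ, g (N + 1) = C (α * β) * X * g N + C (α * β) * X * g (N + 2)
        + C (α ^ 2 + β ^ 2) * X * g (N + 1))
    (hg0 : g 0 = C (α * β) * X * f 0 + C (α * β) * X * g 1
        + C (α * β) * X * fQ + C (α ^ 2 + β ^ 2) * X * g 0)
    (hsupp : ∀ m N : ℕ, m < N → coeff m (f N) = 0 ∧ coeff m (g N) = 0) :
    C (α * β) * (1 - X) ^ 3 * (1 + X + X ^ 2) * psComp (expectedEnd f g) (Zsub α β) =
      X * (X * C α + C β) * (C (3 * β) * X ^ 2 + C (3 * α) + C (3 * β) * X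
        + C α * X + C α * X ^ 2 + C α * X ^ 3) := by
  have hβ0 : (0:ℝ) < β := by rw [hβ]; linarith
  have haz : α ≠ 0 := ne_of_gt hα0
  have hbz : β ≠ 0 := ne_of_gt hβ0
  set Zv := Zsub α β with hZv
  set D : PowerSeries ℝ := (C α + C β * X) * (C β + C α * X) with hD
  have hDc : constantCoeff D ≠ 0 := by
    rw [hD]
    simp [mul_ne_zero haz hbz]
  have hZD : Zv * D = X := by
    rw [hZv, Zsub, ← hD, mul_assoc, mul_comm D⁻¹ D, PowerSeries.mul_inv_cancel D hDc,
      mul_one]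
  have hZ0 : constantCoeff Zv = 0 := by
    rw [hZv, Zsub, map_mul, PowerSeries.constantCoeff_X, zero_mul]
  set F : ℕ → PowerSeries ℝ := fun k => psComp (f k) Zv with hFdef
  set G : ℕ → PowerSeries ℝ := fun k => psComp (g k) Zv with hGdef
  set FQ : PowerSeries ℝ := psComp fQ Zv with hFQdef
  -- substituted equations
  have sf : ∀ N, F (N+2) = C (α*β) * Zv * F (N+1) + C (α*β) * Zv * F (N+3)
      + C (α^2+β^2) * Zv * F (N+2) := fun N => by
    have := congrArg (fun h => psComp h Zv) (hf N)
    simpa only [psComp_add hZ0, psComp_CXmul hZ0] using this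
  have sf1 : F 1 = C (α*β) * Zv * F 0 + C (α*β) * Zv * F 2
      + C (α^2+β^2) * Zv * F 1 + C (β^2) * Zv * FQ := by
    have := congrArg (fun h => psComp h Zv) hf1
    simpa only [psComp_add hZ0, psComp_CXmul hZ0] using this
  have sf0 : F 0 = 1 + C (α*β) * Zv * F 1 + C (α^2+β^2) * Zv * F 0
      + C (α*β) * Zv * FQ := by
    have := congrArg (fun h => psComp h Zv) hf0
    simpa only [psComp_add hZ0, psComp_CXmul hZ0, psComp_one hZ0] using this
  have sfQ : FQ = C (α*β) * Zv * G 0 + C (α^2) * Zv * FQ := by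
    have := congrArg (fun h => psComp h Zv) hfQ
    simpa only [psComp_add hZ0, psComp_CXmul hZ0] using this
  have sg : ∀ N, G (N+1) = C (α*β) * Zv * G N + C (α*β) * Zv * G (N+2)
      + C (α^2+β^2) * Zv * G (N+1) := fun N => by
    have := congrArg (fun h => psComp h Zv) (hg N)
    simpa only [psComp_add hZ0, psComp_CXmul hZ0] using this
  have sg0 : G 0 = C (α*β) * Zv * F 0 + C (α*β) * Zv * G 1
      + C (α*β) * Zv * FQ + C (α^2+β^2) * Zv * G 0 := by
    have := congrArg (fun h => psComp h Zv) hg0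
    simpa only [psComp_add hZ0, psComp_CXmul hZ0] using this
  -- atomize the C-constants
  simp only [map_mul, map_add, map_pow, map_ofNat] at sf sf1 sf0 sfQ sg sg0 ⊢
  set A : PowerSeries ℝ := C α with hA
  set B : PowerSeries ℝ := C β with hB
  have hAB : (A * B : PowerSeries ℝ) ≠ 0 :=
    mul_ne_zero (hCne α haz) (hCne β hbz)
  have hBz : (B : PowerSeries ℝ) ≠ 0 := hCne β hbz
  have hP0 : (A + B * X : PowerSeries ℝ) ≠ 0 := fun h => haz (by
    have := congrArg (constantCoeff) h
    simpa [hA, hB] using this)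
  -- D-multiplied equations
  have E0 : D * F 0 = D + A*B*X*F 1 + (A^2+B^2)*X*F 0 + A*B*X*FQ := by
    rw [hD]
    linear_combination ((A + B*X) * (B + A*X)) * sf0
      + (A*B*F 1 + (A^2+B^2)*F 0 + A*B*FQ) * hZD
  have E1 : D * F 1 = A*B*X*F 0 + A*B*X*F 2 + (A^2+B^2)*X*F 1 + B^2*X*FQ := by
    rw [hD]
    linear_combination ((A + B*X) * (B + A*X)) * sf1
      + (A*B*F 0 + A*B*F 2 + (A^2+B^2)*F 1 + B^2*FQ) * hZD
  have EQm : D * FQ = A*B*X*G 0 + A^2*X*FQ := by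
    rw [hD]
    linear_combination ((A + B*X) * (B + A*X)) * sfQ + (A*B*G 0 + A^2*FQ) * hZD
  have EG : D * G 0 = A*B*X*F 0 + A*B*X*G 1 + A*B*X*FQ + (A^2+B^2)*X*G 0 := by
    rw [hD]
    linear_combination ((A + B*X) * (B + A*X)) * sg0
      + (A*B*F 0 + A*B*G 1 + (A^2+B^2)*G 0 + A*B*FQ) * hZD
  have Ef : ∀ N, D * F (N+2) = A*B*X*F (N+1) + A*B*X*F (N+3) + (A^2+B^2)*X*F (N+2) :=
    fun N => by
    rw [hD]
    linear_combination ((A + B*X) * (B + A*X)) * sf N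
      + (A*B*F (N+1) + A*B*F (N+3) + (A^2+B^2)*F (N+2)) * hZD
  have Eg : ∀ N, D * G (N+1) = A*B*X*G N + A*B*X*G (N+2) + (A^2+B^2)*X*G (N+1) :=
    fun N => by
    rw [hD]
    linear_combination ((A + B*X) * (B + A*X)) * sg N
      + (A*B*G N + A*B*G (N+2) + (A^2+B^2)*G (N+1)) * hZD
  -- telescoping for F
  have hd : ∀ N, F (N+2) - X * F (N+1) = X * (F (N+3) - X * F (N+2)) := fun N =>
    mul_left_cancel₀ hAB (by rw [hD] at Ef; linear_combination Ef N)
  have hiter : ∀ m N, F (N+2) - X * F (N+1) = X^m * (F (m+N+2) - X * F (m+N+1)) := by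
    intro m
    induction m with
    | zero => intro N; simp
    | succ m ih =>
      intro N
      rw [ih N, hd (m+N), show m+1+N+2 = m+N+3 by omega, show m+1+N+1 = m+N+2 by omega,
        pow_succ]
      ring
  have hstep : ∀ N, F (N+2) = X * F (N+1) := by
    intro N
    have hz : F (N+2) - X * F (N+1) = 0 := by
      ext n
      rw [hiter (n+1) N, map_zero, PowerSeries.coeff_X_pow_mul', if_neg (by omega)]
    linear_combination hz
  have hFpow : ∀ j, F (j+1) = X^j * F 1 := by
    intro j
    induction j with
    | zero => simp
    | succ j ih => rw [hstep j, ih, pow_succ]; ring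
  -- telescoping for G
  have hdG : ∀ N, G (N+1) - X * G N = X * (G (N+2) - X * G (N+1)) := fun N =>
    mul_left_cancel₀ hAB (by rw [hD] at Eg; linear_combination Eg N)
  have hiterG : ∀ m N, G (N+1) - X * G N = X^m * (G (m+N+1) - X * G (m+N)) := by
    intro m
    induction m with
    | zero => intro N; simp
    | succ m ih =>
      intro N
      rw [ih N, hdG (m+N), show m+1+N+1 = m+N+2 by omega, show m+1+N = m+N+1 by omega,
        pow_succ]
      ring
  have hstepG : ∀ N, G (N+1) = X * G N := by
    intro N
    have hz : G (N+1) - X * G N = 0 := by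
      ext n
      rw [hiterG (n+1) N, map_zero, PowerSeries.coeff_X_pow_mul', if_neg (by omega)]
    linear_combination hz
  have hGpow : ∀ j, G j = X^j * G 0 := by
    intro j
    induction j with
    | zero => simp
    | succ j ih => rw [hstepG j, ih, pow_succ]; ring
  -- closed form
  have hF1ord : coeff 0 (F 1) = 0 :=
    psComp_ord hZ0 (fun m hm => (hsupp m 1 hm).1) (by omega)
  have hcl : ((1 : PowerSeries ℝ) - X)^2 * expectedEnd F G = 2 * F 1 + (1+X) * G 0 :=
    closed_form (F 1) (G 0) F G hFpow hGpow hF1ord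
  have hEW : psComp (expectedEnd f g) Zv = expectedEnd F G :=
    psComp_expectedEnd hZ0 f g hsupp
  rw [hEW]
  -- elimination chain
  have hG0p : G 0 = X * (F 0 + FQ) :=
    mul_left_cancel₀ hAB (by
      rw [hD] at EG
      linear_combination EG + A*B*X*(hstepG 0))
  have hFQp : (A + B*X) * FQ = A * X^2 * F 0 :=
    mul_left_cancel₀ hBz (by
      rw [hD] at EQm
      linear_combination EQm + A*B*X*hG0p)
  have hF1p : (A + B*X) * F 1 = X * F 0 * (A + B*X + B*X^2) :=
    mul_left_cancel₀ hAB (by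
      rw [hD] at E1
      linear_combination (A + B*X) * E1 + A*B*X*(A + B*X)*(hstep 0) + B^2*X*hFQp)
  have hG0pp : (A + B*X) * G 0 = X * F 0 * (A + B*X + A*X^2) := by
    linear_combination (A + B*X) * hG0p + X * hFQp
  have hF0pp : A*B*(1 - X^3) * F 0 = D :=
    mul_left_cancel₀ hP0 (by
      rw [hD] at E0 ⊢
      linear_combination (A + B*X) * E0 + A*B*X*hF1p + A*B*X*hFQp)
  refine mul_left_cancel₀ hP0 ?_
  rw [hD] at hF0pp
  linear_combination A*B*(1-X)*(1+X+X^2)*(A + B*X)*hcl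
    + A*B*(1-X^3)*(2*hF1p + (1+X)*hG0pp)
    + X*(3*B*X^2 + 3*A + 3*B*X + A*X + A*X^2 + A*X^3)*hF0pp
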